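/- Let r > 0 and a ∈ ℂ with 2a ≠ −3r. With b̃₁(z) = −z² − iza and b̃₂(z) = iz³ + 2izr², one has det [[b̃₁(ir), b̃₂(ir)],[∂_z b̃₁(ir), ∂_z b̃₂(ir)]] = −i r³ (2a + 3r) ≠ 0. -/

import Mathlib

theorem stmt_7 (r : ℝ) (hr : 0 < r) (a : ℂ) (ha : 2 * a ≠ -3 * (r : ℂ))
    (b₁ b₂ : ℂ → ℂ) (hb₁ : ∀ z, b₁ z = -z ^ 2 - Complex.I * z * a)
    (hb₂ : ∀ z, b₂ z = Complex.I * z ^ 3 + 2 * Complex.I * z * (r : ℂ) ^ 2) :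
    Matrix.det !![b₁ (Complex.I * (r : ℂ)), b₂ (Complex.I * (r : ℂ));
        deriv b₁ (Complex.I * (r : ℂ)), deriv b₂ (Complex.I * (r : ℂ))]
      = -Complex.I * (r : ℂ) ^ 3 * (2 * a + 3 * (r : ℂ)) ∧
    Matrix.det !![b₁ (Complex.I * (r : ℂ)), b₂ (Complex.I * (r : ℂ));
        deriv b₁ (Complex.I * (r : ℂ)), deriv b₂ (Complex.I * (r : ℂ))] ≠ 0 := by
  have hb₁' : b₁ = fun z => -z ^ 2 - Complex.I * z * a := funext hb₁
  have hb₂' : b₂ = fun z => Complex.I * z ^ 3 + 2 * Complex.I * z * (r : ℂ) ^ 2 :=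
    funext hb₂
  subst hb₁' hb₂'
  have d1 : ∀ z : ℂ, deriv (fun z => -z ^ 2 - Complex.I * z * a) z
      = -(2 * z) - Complex.I * a := by
    intro z
    have := ((hasDerivAt_pow 2 z).neg.sub
      (((hasDerivAt_id z).const_mul Complex.I).mul_const a)).deriv
    simpa [Pi.neg_def, Pi.sub_def] using this
  have d2 : ∀ z : ℂ, deriv (fun z => Complex.I * z ^ 3 + 2 * Complex.I * z * (r : ℂ) ^ 2) z
      = Complex.I * (3 * z ^ 2) + 2 * Complex.I * (r : ℂ) ^ 2 := by
    intro z
    have := (((hasDerivAt_pow 3 z).const_mul Complex.I).add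
      ((((hasDerivAt_id z).const_mul (2 * Complex.I)).mul_const ((r : ℂ) ^ 2)))).deriv
    simpa [Pi.add_def] using this
  rw [Matrix.det_fin_two_of, d1, d2]
  have key : (-(Complex.I * ↑r) ^ 2 - Complex.I * (Complex.I * ↑r) * a) *
        (Complex.I * (3 * (Complex.I * ↑r) ^ 2) + 2 * Complex.I * ↑r ^ 2) -
      (Complex.I * ((Complex.I * ↑r) ^ 3) + 2 * Complex.I * (Complex.I * ↑r) * ↑r ^ 2) *
        (-(2 * (Complex.I * ↑r)) - Complex.I * a)
      = -Complex.I * (r : ℂ) ^ 3 * (2 * a + 3 * (r : ℂ)) := by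
    linear_combination (-2 * a * (r : ℂ) ^ 3 * Complex.I * (Complex.I ^ 2 - 1)
      - (r : ℂ) ^ 4 * Complex.I * (Complex.I ^ 2 - 3)) * Complex.I_sq
  have hne : -Complex.I * (r : ℂ) ^ 3 * (2 * a + 3 * (r : ℂ)) ≠ 0 := by
    refine mul_ne_zero (mul_ne_zero ?_ ?_) ?_
    · simp only [neg_ne_zero]; exact Complex.I_ne_zero
    · exact pow_ne_zero _ (by exact_mod_cast hr.ne')
    · intro h
      apply ha
      linear_combination h
  exact ⟨key, key ▸ hne⟩
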